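/- Let G be a finite group and n ≥ 2. Define κ : 𝔤𝔩_n(ℂ[G]) × 𝔤𝔩_n(ℂ[G]) → ℂ by κ(X, Y) = the coefficient of the identity element of G in the trace of the matrix product X·Y (an element of ℂ[G]). Then κ is a symmetric bilinear form, it is invariant in the sense that κ([X,Y], Z) = κ(X, [Y,Z]) for all X, Y, Z, and its restriction to the derived subalgebra 𝔰𝔩_n(ℂ[G]) is nondegenerate. (On basis elements, κ(E_{ab}g₁, E_{cd}g₂) = Tr(E_{ab}E_{cd})·δ_{g₁ = g₂⁻¹}.) -/

import Mathlib

/-!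
STATEMENT 3: For a finite group `G` and `n ≥ 2`, the form
`κ(X,Y) = (coefficient of 1 in the trace of X·Y)` on `𝔤𝔩_n(ℂ[G])` is symmetric,
bilinear, invariant (`κ([X,Y],Z) = κ(X,[Y,Z])`), and its restriction to the derived
subalgebra `𝔰𝔩_n(ℂ[G])` (the ℂ-span of brackets) is nondegenerate.  On basis elements,
`κ(E_{ab}g₁, E_{cd}g₂) = Tr(E_{ab}E_{cd}) · δ_{g₁ = g₂⁻¹}`.
-/


open Finset

namespace Stmt3Aux

variable {G : Type} [Group G] [DecidableEq G] [Fintype G]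

lemma coeff_sum_apply {ι : Type*} (s : Finset ι) (f : ι → MonoidAlgebra ℂ G) (g : G) :
    (∑ i ∈ s, f i).coeff g = ∑ i ∈ s, (f i).coeff g := by
  rw [MonoidAlgebra.coeff_sum, Finsupp.finset_sum_apply]

lemma coeff_sub_apply (u v : MonoidAlgebra ℂ G) (g : G) :
    (u - v).coeff g = u.coeff g - v.coeff g := by
  rw [MonoidAlgebra.coeff_sub, Finsupp.sub_apply]

lemma coeff_add_apply (u v : MonoidAlgebra ℂ G) (g : G) :
    (u + v).coeff g = u.coeff g + v.coeff g := by
  rw [MonoidAlgebra.coeff_add, Finsupp.add_apply]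

lemma mul_apply_L (u v : MonoidAlgebra ℂ G) (x : G) :
    (u * v).coeff x = ∑ a : G, u.coeff a * v.coeff (a⁻¹ * x) := by
  rw [MonoidAlgebra.coeff_mul_apply_left, Finsupp.sum_fintype]
  intro a; simp

lemma mul_apply_R (u v : MonoidAlgebra ℂ G) (x : G) :
    (u * v).coeff x = ∑ a : G, u.coeff (x * a⁻¹) * v.coeff a := by
  rw [MonoidAlgebra.coeff_mul_apply_right, Finsupp.sum_fintype]
  intro a; simp

lemma comm_one (u v : MonoidAlgebra ℂ G) : (u * v).coeff (1 : G) = (v * u).coeff (1 : G) := by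
  rw [mul_apply_L, mul_apply_R]
  exact Finset.sum_congr rfl fun a _ => by rw [mul_one, one_mul, mul_comm]

lemma tr1 {n : ℕ} (A B : Matrix (Fin n) (Fin n) (MonoidAlgebra ℂ G)) :
    (Matrix.trace (A * B)).coeff (1 : G) = (Matrix.trace (B * A)).coeff (1 : G) := by
  rw [Matrix.trace, Matrix.trace, coeff_sum_apply, coeff_sum_apply]
  simp only [Matrix.diag_apply, Matrix.mul_apply]
  rw [show (∑ i, ((∑ j, A i j * B j i).coeff (1:G))) = ∑ i, ∑ j, ((A i j * B j i).coeff (1:G)) from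
    Finset.sum_congr rfl fun i _ => coeff_sum_apply _ _ _,
    show (∑ i, ((∑ j, B i j * A j i).coeff (1:G))) = ∑ i, ∑ j, ((B i j * A j i).coeff (1:G)) from
    Finset.sum_congr rfl fun i _ => coeff_sum_apply _ _ _]
  conv_lhs => rw [Finset.sum_comm]
  exact Finset.sum_congr rfl fun j _ => Finset.sum_congr rfl fun i _ => comm_one _ _

lemma conj_sum (k : G) (u v : MonoidAlgebra ℂ G) :
    ∑ g : G, (u * v).coeff (g * k * g⁻¹) = ∑ g : G, (v * u).coeff (g * k * g⁻¹) := by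
  have hR : ∀ g : G, (v * u).coeff (g * k * g⁻¹)
      = ∑ a : G, u.coeff a * v.coeff ((g * k * g⁻¹) * a⁻¹) := by
    intro g
    rw [mul_apply_R]
    exact Finset.sum_congr rfl fun a _ => mul_comm _ _
  simp only [mul_apply_L, hR]
  rw [Finset.sum_comm]
  conv_rhs => rw [Finset.sum_comm]
  refine Finset.sum_congr rfl fun a _ => ?_
  refine Fintype.sum_equiv (Equiv.mulLeft a⁻¹) _ _ fun x => ?_
  simp only [Equiv.coe_mulLeft]
  congr 1
  group


lemma msub_apply {n : ℕ} (u v : Matrix (Fin n) (Fin n) (MonoidAlgebra ℂ G)) (y : G) :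
    ∀ g : G, (Matrix.trace u - Matrix.trace v).coeff g = (Matrix.trace u).coeff g - (Matrix.trace v).coeff g :=
  fun g => coeff_sub_apply _ _ _

lemma tr_conj_expand {n : ℕ} (k : G) (A B : Matrix (Fin n) (Fin n) (MonoidAlgebra ℂ G)) :
    ∑ g : G, (Matrix.trace (A * B)).coeff (g * k * g⁻¹)
      = ∑ i, ∑ j, ∑ g : G, (A i j * B j i).coeff (g * k * g⁻¹) := by
  have h1 : ∀ g : G, (Matrix.trace (A * B)).coeff (g * k * g⁻¹)
      = ∑ i, ∑ j, (A i j * B j i).coeff (g * k * g⁻¹) := by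
    intro g
    rw [Matrix.trace, coeff_sum_apply]
    refine Finset.sum_congr rfl fun i _ => ?_
    rw [Matrix.diag_apply, Matrix.mul_apply, coeff_sum_apply]
  simp only [h1]
  rw [Finset.sum_comm]
  exact Finset.sum_congr rfl fun i _ => Finset.sum_comm

lemma tr_conj_comm {n : ℕ} (k : G) (A B : Matrix (Fin n) (Fin n) (MonoidAlgebra ℂ G)) :
    ∑ g : G, (Matrix.trace (A * B)).coeff (g * k * g⁻¹)
      = ∑ g : G, (Matrix.trace (B * A)).coeff (g * k * g⁻¹) := by
  rw [tr_conj_expand, tr_conj_expand]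
  rw [Finset.sum_comm]
  exact Finset.sum_congr rfl fun j _ => Finset.sum_congr rfl fun i _ => conj_sum k _ _

lemma span_trace {n : ℕ} (X : Matrix (Fin n) (Fin n) (MonoidAlgebra ℂ G))
    (hX : X ∈ Submodule.span ℂ
      {X : Matrix (Fin n) (Fin n) (MonoidAlgebra ℂ G) | ∃ A B, X = A * B - B * A}) (k : G) :
    ∑ g : G, (Matrix.trace X).coeff (g * k * g⁻¹) = 0 := by
  induction hX using Submodule.span_induction with
  | mem x hx =>
      obtain ⟨A, B, rfl⟩ := hx
      rw [Matrix.trace_sub,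
        Finset.sum_congr rfl fun g (_ : g ∈ Finset.univ) =>
          (coeff_sub_apply (Matrix.trace (A*B)) (Matrix.trace (B*A)) (g*k*g⁻¹)),
        Finset.sum_sub_distrib, tr_conj_comm, sub_self]
  | zero => simp
  | add x y _ _ hx hy =>
      rw [Matrix.trace_add,
        Finset.sum_congr rfl fun g (_ : g ∈ Finset.univ) =>
          (coeff_add_apply (Matrix.trace x) (Matrix.trace y) (g*k*g⁻¹)),
        Finset.sum_add_distrib, hx, hy, add_zero]
  | smul c x _ hx =>
      rw [Matrix.trace_smul,
        Finset.sum_congr rfl fun g (_ : g ∈ Finset.univ) =>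
          (MonoidAlgebra.coeff_smul_apply c (Matrix.trace x) (g*k*g⁻¹)),
        Finset.sum_congr rfl fun g (_ : g ∈ Finset.univ) =>
          (smul_eq_mul (a := c) (b := (Matrix.trace x).coeff (g*k*g⁻¹))),
        ← Finset.mul_sum, hx, mul_zero]

lemma trace_std {n : ℕ} {α : Type*} [AddCommMonoid α] (a d : Fin n) (r : α) :
    Matrix.trace (Matrix.single a d r) = if a = d then r else 0 := by
  simp only [Matrix.trace, Matrix.diag_apply, Matrix.single, Matrix.of_apply, ite_and]
  rw [Finset.sum_ite_eq]
  simp [eq_comm]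

lemma trace_mul_std {n : ℕ} (X : Matrix (Fin n) (Fin n) (MonoidAlgebra ℂ G)) (c d : Fin n)
    (r : MonoidAlgebra ℂ G) :
    Matrix.trace (X * Matrix.single c d r) = X d c * r := by
  rw [Matrix.trace, Finset.sum_eq_single d]
  · exact Matrix.mul_single_apply_same (c := r) c d d X
  · intro i _ hi
    exact Matrix.mul_single_apply_of_ne (c := r) c d i i hi X
  · simp

end Stmt3Aux

set_option maxHeartbeats 1000000 in
theorem stmt_3 (G : Type) [Group G] [Finite G] [DecidableEq G] (n : ℕ) (hn : 2 ≤ n)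
    (κ : Matrix (Fin n) (Fin n) (MonoidAlgebra ℂ G) →
          Matrix (Fin n) (Fin n) (MonoidAlgebra ℂ G) → ℂ)
    (hκ : ∀ X Y, κ X Y = (Matrix.trace (X * Y)).coeff (1 : G)) :
    (∀ X Y, κ X Y = κ Y X)
    ∧ (∀ X₁ X₂ Y, κ (X₁ + X₂) Y = κ X₁ Y + κ X₂ Y)
    ∧ (∀ (c : ℂ) X Y, κ (c • X) Y = c * κ X Y)
    ∧ (∀ X Y₁ Y₂, κ X (Y₁ + Y₂) = κ X Y₁ + κ X Y₂)
    ∧ (∀ (c : ℂ) X Y, κ X (c • Y) = c * κ X Y)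
    ∧ (∀ X Y Z, κ ⁅X, Y⁆ Z = κ X ⁅Y, Z⁆)
    ∧ (∀ X ∈ Submodule.span ℂ
          {X : Matrix (Fin n) (Fin n) (MonoidAlgebra ℂ G) | ∃ A B, X = A * B - B * A},
        (∀ Y ∈ Submodule.span ℂ
            {X : Matrix (Fin n) (Fin n) (MonoidAlgebra ℂ G) | ∃ A B, X = A * B - B * A},
          κ X Y = 0) → X = 0)
    ∧ (∀ (a b c d : Fin n) (g₁ g₂ : G),
        κ (Matrix.single a b (MonoidAlgebra.single g₁ (1 : ℂ)))
          (Matrix.single c d (MonoidAlgebra.single g₂ (1 : ℂ)))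
        = Matrix.trace
            (Matrix.single a b (1 : ℂ) * Matrix.single c d (1 : ℂ))
          * (if g₁ = g₂⁻¹ then 1 else 0)) := by
  classical
  cases nonempty_fintype G
  have addap : ∀ (u v : MonoidAlgebra ℂ G) (y : G), (u + v).coeff y = u.coeff y + v.coeff y :=
    fun u v y => Stmt3Aux.coeff_add_apply u v y
  have subap : ∀ (u v : MonoidAlgebra ℂ G) (y : G), (u - v).coeff y = u.coeff y - v.coeff y :=
    fun u v y => Stmt3Aux.coeff_sub_apply u v y
  have smulap : ∀ (c : ℂ) (u : MonoidAlgebra ℂ G) (y : G), (c • u).coeff y = c * u.coeff y :=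
    fun c u y => (MonoidAlgebra.coeff_smul_apply c u y).trans
      (smul_eq_mul (a := c) (b := u.coeff y))
  have κsub : ∀ X Y₁ Y₂, κ X (Y₁ - Y₂) = κ X Y₁ - κ X Y₂ := by
    intro X Y₁ Y₂
    rw [hκ, hκ, hκ, mul_sub, Matrix.trace_sub, subap]
  refine ⟨?_, ?_, ?_, ?_, ?_, ?_, ?_, ?_⟩
  · intro X Y; rw [hκ, hκ, Stmt3Aux.tr1]
  · intro X₁ X₂ Y; rw [hκ, hκ, hκ, add_mul, Matrix.trace_add, addap]
  · intro c X Y; rw [hκ, hκ, smul_mul_assoc, Matrix.trace_smul, smulap]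
  · intro X Y₁ Y₂; rw [hκ, hκ, hκ, mul_add, Matrix.trace_add, addap]
  · intro c X Y; rw [hκ, hκ, mul_smul_comm, Matrix.trace_smul, smulap]
  · intro X Y Z
    rw [hκ, hκ, Ring.lie_def, Ring.lie_def, sub_mul, mul_sub, Matrix.trace_sub,
      Matrix.trace_sub, subap, subap, mul_assoc]
    have e2 : (Matrix.trace (X * (Z * Y))).coeff (1 : G) = (Matrix.trace (Y * X * Z)).coeff (1 : G) := by
      rw [← mul_assoc, Stmt3Aux.tr1 (X * Z) Y, ← mul_assoc]
    rw [e2]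
  · intro X hX hY
    set i0 : Fin n := ⟨0, by omega⟩ with hi0
    have hκstd : ∀ (c d : Fin n) (r : MonoidAlgebra ℂ G),
        κ X (Matrix.single c d r) = (X d c * r).coeff (1 : G) := by
      intro c d r; rw [hκ, Stmt3Aux.trace_mul_std]
    have memS : ∀ A B : Matrix (Fin n) (Fin n) (MonoidAlgebra ℂ G),
        A * B - B * A ∈ Submodule.span ℂ
          {X : Matrix (Fin n) (Fin n) (MonoidAlgebra ℂ G) | ∃ A B, X = A * B - B * A} :=
      fun A B => Submodule.subset_span ⟨A, B, rfl⟩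
    have memE : ∀ (c d : Fin n), c ≠ d → ∀ r : MonoidAlgebra ℂ G,
        Matrix.single c d r ∈ Submodule.span ℂ
          {X : Matrix (Fin n) (Fin n) (MonoidAlgebra ℂ G) | ∃ A B, X = A * B - B * A} := by
      intro c d hcd r
      have h : Matrix.single c d r
          = Matrix.single c c (1 : MonoidAlgebra ℂ G) * Matrix.single c d r
            - Matrix.single c d r * Matrix.single c c (1 : MonoidAlgebra ℂ G) := by
        rw [Matrix.single_mul_single_same, Matrix.single_mul_single_of_ne (h := Ne.symm hcd),
          one_mul, sub_zero]
      rw [h]; exact memS _ _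
    have offd : ∀ i j : Fin n, i ≠ j → X i j = 0 := by
      intro i j hij
      ext t
      have h0 := hY (Matrix.single j i (MonoidAlgebra.single t⁻¹ (1 : ℂ)))
        (memE j i (Ne.symm hij) _)
      rw [hκstd, MonoidAlgebra.coeff_mul_single_apply] at h0
      simpa using h0
    have diag : ∀ (a b : Fin n) (t : G), (X a a).coeff t = (X b b).coeff t := by
      intro a b t
      rcases eq_or_ne a b with rfl | hab
      · rfl
      · have h : Matrix.single a a (MonoidAlgebra.single t⁻¹ (1 : ℂ))
            - Matrix.single b b (MonoidAlgebra.single t⁻¹ (1 : ℂ))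
            = Matrix.single a b (MonoidAlgebra.single t⁻¹ (1 : ℂ))
              * Matrix.single b a (1 : MonoidAlgebra ℂ G)
            - Matrix.single b a (1 : MonoidAlgebra ℂ G)
              * Matrix.single a b (MonoidAlgebra.single t⁻¹ (1 : ℂ)) := by
          rw [Matrix.single_mul_single_same, Matrix.single_mul_single_same, mul_one, one_mul]
        have hmem := memS (Matrix.single a b (MonoidAlgebra.single t⁻¹ (1 : ℂ)))
          (Matrix.single b a (1 : MonoidAlgebra ℂ G))
        rw [← h] at hmem
        have h0 := hY _ hmem
        rw [κsub, hκstd, hκstd, MonoidAlgebra.coeff_mul_single_apply,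
          MonoidAlgebra.coeff_mul_single_apply] at h0
        simpa [sub_eq_zero] using h0
    have classfun : ∀ u v : G, (X i0 i0).coeff (u * v) = (X i0 i0).coeff (v * u) := by
      intro u v
      have h : Matrix.single i0 i0 (MonoidAlgebra.single ((v⁻¹ * u⁻¹)⁻¹)⁻¹ (1 : ℂ))
          - Matrix.single i0 i0 (MonoidAlgebra.single ((u⁻¹ * v⁻¹)⁻¹)⁻¹ (1 : ℂ))
          = Matrix.single i0 i0 (MonoidAlgebra.single v⁻¹ (1 : ℂ))
            * Matrix.single i0 i0 (MonoidAlgebra.single u⁻¹ (1 : ℂ))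
          - Matrix.single i0 i0 (MonoidAlgebra.single u⁻¹ (1 : ℂ))
            * Matrix.single i0 i0 (MonoidAlgebra.single v⁻¹ (1 : ℂ)) := by
        rw [Matrix.single_mul_single_same, Matrix.single_mul_single_same,
          MonoidAlgebra.single_mul_single, MonoidAlgebra.single_mul_single, one_mul,
          inv_inv, inv_inv]
      have hmem := memS (Matrix.single i0 i0 (MonoidAlgebra.single v⁻¹ (1 : ℂ)))
        (Matrix.single i0 i0 (MonoidAlgebra.single u⁻¹ (1 : ℂ)))
      rw [← h] at hmem
      have h0 := hY _ hmem
      rw [κsub, hκstd, hκstd, MonoidAlgebra.coeff_mul_single_apply,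
        MonoidAlgebra.coeff_mul_single_apply] at h0
      have h1 := sub_eq_zero.mp h0
      simpa [mul_inv_rev] using h1
    have hx0 : ∀ t : G, (X i0 i0).coeff t = 0 := by
      intro k
      have hs := Stmt3Aux.span_trace X hX k
      have hconj : ∀ g : G, (X i0 i0).coeff (g * k * g⁻¹) = (X i0 i0).coeff k := by
        intro g
        have h := classfun g (k * g⁻¹)
        rw [← mul_assoc] at h
        rw [h, mul_assoc, inv_mul_cancel, mul_one]
      have htr : ∀ g : G, (Matrix.trace X).coeff (g * k * g⁻¹) = (n : ℂ) * (X i0 i0).coeff k := by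
        intro g
        rw [Matrix.trace, Stmt3Aux.coeff_sum_apply,
          Finset.sum_congr rfl fun i (_ : i ∈ Finset.univ) =>
            (by rw [Matrix.diag_apply, diag i i0, hconj g] :
              (Matrix.diag X i).coeff (g * k * g⁻¹) = (X i0 i0).coeff k),
          Finset.sum_const, Finset.card_univ, Fintype.card_fin, nsmul_eq_mul]
      rw [Finset.sum_congr rfl (fun g _ => htr g), Finset.sum_const, Finset.card_univ,
        nsmul_eq_mul] at hs
      have hcard : (Fintype.card G : ℂ) ≠ 0 := Nat.cast_ne_zero.2 Fintype.card_ne_zero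
      have hn' : (n : ℂ) ≠ 0 := Nat.cast_ne_zero.2 (by omega)
      rcases mul_eq_zero.mp hs with h | h
      · exact absurd h hcard
      · rcases mul_eq_zero.mp h with h' | h'
        · exact absurd h' hn'
        · exact h'
    ext i j
    rcases eq_or_ne i j with rfl | hij
    · have : X i i = 0 := by
        ext t
        rw [diag i i0 t, hx0 t]; rfl
      rw [this]; rfl
    · rw [offd i j hij]; rfl
  · intro a b c d g₁ g₂
    by_cases hbc : b = c
    · subst hbc
      rw [hκ, Matrix.single_mul_single_same, Matrix.single_mul_single_same, one_mul,
        Stmt3Aux.trace_std, Stmt3Aux.trace_std, MonoidAlgebra.single_mul_single, one_mul]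
      by_cases had : a = d
      · rw [if_pos had, if_pos had, MonoidAlgebra.coeff_single_apply, one_mul]
        by_cases hg : g₁ = g₂⁻¹
        · rw [if_pos hg, if_pos (by rw [hg]; exact inv_mul_cancel g₂)]
        · rw [if_neg hg, if_neg (fun h => hg (eq_inv_of_mul_eq_one_left h))]
      · rw [if_neg had, if_neg had, zero_mul]; rfl
    · rw [hκ, Matrix.single_mul_single_of_ne (h := hbc), Matrix.single_mul_single_of_ne (h := hbc),
        Matrix.trace_zero, Matrix.trace_zero, zero_mul]; rfl
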